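/- Let n ≥ 1 and consider extended phase space ℝ^(n+1) × ℝ^(n+1) with coordinates z = (q₁,…,qₙ, t, p₁,…,pₙ, ℘), and let d = 2(n+1). Let H : ℝ^(n+1) × ℝ^(n+1) → ℝ be three times continuously differentiable with ∂H/∂℘ ≡ 0 (H depends only on (q₁,…,qₙ, t, p₁,…,pₙ)), and define the extended Hamiltonian 𝓗(z) = ℘ + H(z) and ψ(z) = ⟨J∇𝓗(z), (Hess 𝓗(z))(J∇𝓗(z))⟩. Let L(z) = ½⟨z, Az⟩ + ⟨b, z⟩ + c be a quadratic function with A symmetric, satisfying ∂L/∂t ≡ 0, ∂L/∂℘ ≡ 0, and Σᵢ₌₁ⁿ (∂L/∂qᵢ · ∂H/∂pᵢ − ∂L/∂pᵢ · ∂H/∂qᵢ)(z) = 0 for all z. If z₀, z₁ ∈ ℝ^d and λ, μ ∈ ℝ satisfy z₁ − z₀ = λ J∇𝓗(z̄) + μ J∇ψ(z̄) with z̄ = (z₀ + z₁)/2, then L(z₁) = L(z₀). -/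

import Mathlib

noncomputable section

open scoped RealInnerProductSpace

/-- `ℝ^m` with the Euclidean inner product. -/
abbrev V (m : ℕ) : Type := EuclideanSpace ℝ (Fin m)

/-- Phase space `ℝ^m × ℝ^m ≅ ℝ^(2m)`, with the Euclidean (`L²`) inner product. -/
abbrev Phase (m : ℕ) : Type := WithLp 2 (V m × V m)

/-- The identification `Phase m ≃ ℝ^m × ℝ^m`. -/
def e (m : ℕ) : Phase m ≃L[ℝ] V m × V m := WithLp.prodContinuousLinearEquiv 2 ℝ (V m) (V m)

/-- The point `z = (q, p)` of phase space. -/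
def pt {m : ℕ} (q p : V m) : Phase m := (e m).symm (q, p)

/-- The position (`q`) part of a phase-space point. -/
def qpart {m : ℕ} (z : Phase m) : V m := ((e m) z).1

/-- The momentum (`p`) part of a phase-space point. -/
def ppart {m : ℕ} (z : Phase m) : V m := ((e m) z).2

/-- The standard symplectic matrix `J`, acting by `J (q, p) = (p, -q)`. -/
def Jmap {m : ℕ} : Phase m →L[ℝ] Phase m :=
  ((e m).symm : V m × V m →L[ℝ] Phase m).comp
    (((ContinuousLinearMap.snd ℝ (V m) (V m)).prod
      (-(ContinuousLinearMap.fst ℝ (V m) (V m)))).comp ((e m) : Phase m →L[ℝ] V m × V m))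

/-- The Hessian of `H` at `z`, viewed as a linear map: the derivative of the gradient. -/
def hess {m : ℕ} (H : Phase m → ℝ) (z : Phase m) : Phase m →L[ℝ] Phase m :=
  fderiv ℝ (gradient H) z

/-- `ψ_H(z) = ⟨J ∇H(z), (Hess H(z)) (J ∇H(z))⟩`. -/
def psi {m : ℕ} (H : Phase m → ℝ) (z : Phase m) : ℝ :=
  ⟪Jmap (gradient H z), hess H z (Jmap (gradient H z))⟫

section AuxLemmas
variable {m : ℕ}

instance instCSPhase : ContinuousSMul ℝ (Phase m) := inferInstance

lemma J_q (z : Phase m) : qpart (Jmap z) = ppart z := rfl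
lemma J_p (z : Phase m) : ppart (Jmap z) = -qpart z := rfl
lemma qpart_add (u w : Phase m) : qpart (u + w) = qpart u + qpart w := rfl
lemma ppart_add (u w : Phase m) : ppart (u + w) = ppart u + ppart w := rfl

lemma inner_split (u w : Phase m) : ⟪u, w⟫ = ⟪qpart u, qpart w⟫ + ⟪ppart u, ppart w⟫ := rfl

lemma J_adj (u w : Phase m) : ⟪Jmap u, w⟫ = -⟪u, Jmap w⟫ := by
  rw [inner_split, inner_split]
  rw [show qpart (Jmap u) = ppart u from rfl, show ppart (Jmap u) = -qpart u from rfl,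
    show qpart (Jmap w) = ppart w from rfl, show ppart (Jmap w) = -qpart w from rfl]
  rw [inner_neg_left, inner_neg_right]
  ring

lemma inner_J_coord (u w : Phase m) :
    ⟪u, Jmap w⟫ = ∑ j, (qpart u j * ppart w j - ppart u j * qpart w j) := by
  rw [inner_split, show qpart (Jmap w) = ppart w from rfl, show ppart (Jmap w) = -qpart w from rfl]
  rw [inner_neg_right]
  simp only [PiLp.inner_apply, RCLike.inner_apply, conj_trivial]
  rw [Finset.sum_sub_distrib]
  ring_nf
  simp only [mul_comm]

lemma grad_inner (f : Phase m → ℝ) (x v : Phase m) : ⟪gradient f x, v⟫ = fderiv ℝ f x v :=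
  InnerProductSpace.toDual_symm_apply

lemma hess_inner (f : Phase m → ℝ) (z v w : Phase m) :
    ⟪hess f z v, w⟫ = fderiv ℝ (fderiv ℝ f) z v w := by
  have h : gradient f = (InnerProductSpace.toDual ℝ (Phase m)).symm ∘ fderiv ℝ f := rfl
  rw [hess, h, LinearIsometryEquiv.comp_fderiv]
  exact InnerProductSpace.toDual_symm_apply

lemma contDiff_gradient (f : Phase m → ℝ) (hf : ContDiff ℝ 3 f) : ContDiff ℝ 2 (gradient f) := by
  have h : gradient f = fun x => (InnerProductSpace.toDual ℝ (Phase m)).symm (fderiv ℝ f x) := rfl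
  rw [h]
  exact (InnerProductSpace.toDual ℝ (Phase m)).symm.contDiff.comp (hf.fderiv_right (by norm_num))

lemma hess_symm (f : Phase m → ℝ) (hf : ContDiff ℝ 3 f) (z v w : Phase m) :
    ⟪hess f z v, w⟫ = ⟪v, hess f z w⟫ := by
  have hs : IsSymmSndFDerivAt ℝ f z := hf.contDiffAt.isSymmSndFDerivAt (by norm_num)
  rw [hess_inner, real_inner_comm _ v, hess_inner]
  exact hs v w

lemma hess3_symm (f : Phase m → ℝ) (hf : ContDiff ℝ 3 f) (z u v : Phase m) :
    fderiv ℝ (hess f) z u v = fderiv ℝ (hess f) z v u := by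
  have hs : IsSymmSndFDerivAt ℝ (gradient f) z :=
    (contDiff_gradient f hf).contDiffAt.isSymmSndFDerivAt (by norm_num)
  exact hs u v

end AuxLemmas

set_option maxHeartbeats 2000000

/-- conservation of quadratic momenta in extended phase space.
On extended phase space `ℝ^(n+1) × ℝ^(n+1)` with `z = (q₁,…,qₙ, t, p₁,…,pₙ, ℘)`,
let `𝓗(z) = ℘ + H(z)` where `H` is `C³` with `∂H/∂℘ ≡ 0`, and let
`L(z) = ½⟨z, Az⟩ + ⟨b, z⟩ + c` be quadratic with `∂L/∂t ≡ 0`, `∂L/∂℘ ≡ 0` and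
`Σᵢ₌₁ⁿ (L_{qᵢ} H_{pᵢ} - L_{pᵢ} H_{qᵢ}) ≡ 0`. If
`z₁ - z₀ = λ J∇𝓗(z̄) + μ J∇ψ_𝓗(z̄)` with `z̄ = (z₀ + z₁)/2`, then `L(z₁) = L(z₀)`. -/
theorem extended_quadratic_conservation (n : ℕ) (hn : 1 ≤ n)
    (H : Phase (n + 1) → ℝ) (hH : ContDiff ℝ 3 H)
    (hHwp : ∀ z : Phase (n + 1), ppart (gradient H z) (Fin.last n) = 0)
    (𝓗 : Phase (n + 1) → ℝ)
    (h𝓗 : ∀ z : Phase (n + 1), 𝓗 z = ppart z (Fin.last n) + H z)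
    (A : Phase (n + 1) →L[ℝ] Phase (n + 1))
    (hA : ∀ v w : Phase (n + 1), ⟪A v, w⟫ = ⟪v, A w⟫)
    (b : Phase (n + 1)) (c : ℝ) (L : Phase (n + 1) → ℝ)
    (hL : ∀ z : Phase (n + 1), L z = (1 / 2 : ℝ) * ⟪z, A z⟫ + ⟪b, z⟫ + c)
    (hLt : ∀ z : Phase (n + 1), qpart (gradient L z) (Fin.last n) = 0)
    (hLwp : ∀ z : Phase (n + 1), ppart (gradient L z) (Fin.last n) = 0)
    (hbr : ∀ z : Phase (n + 1),
      ∑ i : Fin n,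
        (qpart (gradient L z) i.castSucc * ppart (gradient H z) i.castSucc
          - ppart (gradient L z) i.castSucc * qpart (gradient H z) i.castSucc) = 0)
    (z₀ z₁ : Phase (n + 1)) (lam mu : ℝ)
    (zbar : Phase (n + 1)) (hzbar : zbar = (2:ℝ)⁻¹ • (z₀ + z₁))
    (hstep : z₁ - z₀
      = lam • Jmap (gradient 𝓗 zbar) + mu • Jmap (gradient (psi 𝓗) zbar)) :
    L z₁ = L z₀ := by
  classical
  set ε : Phase (n+1) := pt 0 (EuclideanSpace.single (Fin.last n) 1) with hε
  have hεq : qpart ε = 0 := rfl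
  have hεp : ppart ε = EuclideanSpace.single (Fin.last n) 1 := rfl
  have hlin : ∀ z : Phase (n+1), ppart z (Fin.last n) = ⟪ε, z⟫ := by
    intro z
    rw [inner_split, hεq, hεp, inner_zero_left, EuclideanSpace.inner_single_left]
    simp
  have h𝓗' : 𝓗 = fun z => ⟪ε, z⟫ + H z := by
    funext z; rw [h𝓗 z, hlin]
  have hc𝓗 : ContDiff ℝ 3 𝓗 := by
    rw [h𝓗']
    exact ((innerSL ℝ ε).contDiff).add hH
  -- gradient of 𝓗
  have hgrad𝓗 : ∀ z, gradient 𝓗 z = ε + gradient H z := by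
    intro z
    apply ext_inner_right ℝ
    intro v
    have h3 : HasFDerivAt 𝓗 (innerSL ℝ ε + fderiv ℝ H z) z := by
      rw [h𝓗']
      exact ((innerSL ℝ ε).hasFDerivAt).add (hH.differentiable (by norm_num) z).hasFDerivAt
    rw [grad_inner, h3.fderiv, inner_add_left, grad_inner]
    simp
  -- gradient of L
  have hgradL : ∀ z, gradient L z = A z + b := by
    intro z
    apply ext_inner_right ℝ
    intro v
    have h1 : HasFDerivAt (fun y : Phase (n+1) => ⟪y, A y⟫)
        ((fderivInnerCLM ℝ (z, A z)).comp ((ContinuousLinearMap.id ℝ (Phase (n+1))).prod A)) z :=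
      (hasFDerivAt_id z).inner ℝ (A.hasFDerivAt)
    have h2 : HasFDerivAt L ((1/2 : ℝ) •
          ((fderivInnerCLM ℝ (z, A z)).comp ((ContinuousLinearMap.id ℝ (Phase (n+1))).prod A))
          + innerSL ℝ b) z := by
      have hLfun : L = fun y => (1/2 : ℝ) * ⟪y, A y⟫ + ⟪b, y⟫ + c := funext hL
      rw [hLfun]
      exact ((h1.const_mul (1/2 : ℝ)).add (innerSL ℝ b).hasFDerivAt).add_const c
    rw [grad_inner, h2.fderiv]
    simp only [ContinuousLinearMap.add_apply, ContinuousLinearMap.smul_apply,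
      ContinuousLinearMap.comp_apply, ContinuousLinearMap.prod_apply,
      ContinuousLinearMap.coe_id', id_eq, fderivInnerCLM_apply, innerSL_apply_apply,
      inner_add_left, smul_eq_mul]
    rw [← hA z v, real_inner_comm (A z) v]
    ring
  -- the Poisson bracket {L, 𝓗} vanishes identically
  have hbracket : ∀ z, ⟪gradient L z, Jmap (gradient 𝓗 z)⟫ = 0 := by
    intro z
    rw [inner_J_coord, hgrad𝓗 z]
    have hsum : ∀ j : Fin (n+1),
        qpart (gradient L z) j * ppart (ε + gradient H z) j
          - ppart (gradient L z) j * qpart (ε + gradient H z) j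
        = (qpart (gradient L z) j * ppart (gradient H z) j
            - ppart (gradient L z) j * qpart (gradient H z) j)
          + qpart (gradient L z) j * (EuclideanSpace.single (Fin.last n) (1:ℝ)) j := by
      intro j
      rw [qpart_add, ppart_add, hεq, hεp]
      simp only [PiLp.add_apply, PiLp.zero_apply, zero_add]
      ring
    rw [Finset.sum_congr rfl (fun j _ => hsum j), Finset.sum_add_distrib]
    have e1 : ∑ j : Fin (n+1),
        qpart (gradient L z) j * (EuclideanSpace.single (Fin.last n) (1:ℝ)) j
        = qpart (gradient L z) (Fin.last n) := by
      rw [Fin.sum_univ_castSucc]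
      have h0 : (∑ i : Fin n, qpart (gradient L z) i.castSucc
          * (EuclideanSpace.single (Fin.last n) (1:ℝ)) i.castSucc) = 0 := by
        apply Finset.sum_eq_zero; intro i _
        rw [EuclideanSpace.single_apply, if_neg (Fin.ne_of_lt (Fin.castSucc_lt_last i))]
        ring
      rw [h0, EuclideanSpace.single_apply, if_pos rfl]
      ring
    rw [e1, hLt z, Fin.sum_univ_castSucc, hbr z]
    simp [hLt z, hLwp z]
  -- smoothness of the gradient and hessian of 𝓗
  have hFc : ContDiff ℝ 2 (gradient 𝓗) := contDiff_gradient 𝓗 hc𝓗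
  have hΦc : ContDiff ℝ 1 (fun y => hess 𝓗 y) := by
    have h : (fun y => hess 𝓗 y) = fderiv ℝ (gradient 𝓗) := rfl
    rw [h]
    exact hFc.fderiv_right (by norm_num)
  -- hessian applied to the Hamiltonian vector field of L
  have hkey : ∀ z : Phase (n+1),
      hess 𝓗 z (Jmap (A z + b)) = A (Jmap (gradient 𝓗 z)) := by
    intro z
    have hXd : HasFDerivAt (fun y => Jmap (gradient 𝓗 y)) (Jmap.comp (hess 𝓗 z)) z :=
      Jmap.hasFDerivAt.comp z ((hFc.differentiable two_ne_zero z).hasFDerivAt)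
    have hAd : HasFDerivAt (fun y : Phase (n+1) => A y + b) (A : Phase (n+1) →L[ℝ] Phase (n+1)) z := by
      simpa using (A.hasFDerivAt (x := z)).add_const b
    have h0 : HasFDerivAt (fun y => ⟪A y + b, Jmap (gradient 𝓗 y)⟫)
        ((fderivInnerCLM ℝ (A z + b, Jmap (gradient 𝓗 z))).comp
          ((A : Phase (n+1) →L[ℝ] Phase (n+1)).prod (Jmap.comp (hess 𝓗 z)))) z :=
      hAd.inner ℝ hXd
    have hzero : (fun y => ⟪A y + b, Jmap (gradient 𝓗 y)⟫) = fun _ : Phase (n+1) => (0:ℝ) := by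
      funext y; rw [← hgradL y]; exact hbracket y
    have hD : ((fderivInnerCLM ℝ (A z + b, Jmap (gradient 𝓗 z))).comp
        ((A : Phase (n+1) →L[ℝ] Phase (n+1)).prod (Jmap.comp (hess 𝓗 z)))) = 0 :=
      (hzero ▸ h0).unique (hasFDerivAt_const (0:ℝ) z)
    have hDv : ∀ v : Phase (n+1),
        ⟪A z + b, Jmap (hess 𝓗 z v)⟫ + ⟪A v, Jmap (gradient 𝓗 z)⟫ = 0 := by
      intro v
      have := ContinuousLinearMap.ext_iff.mp hD v
      simpa [fderivInnerCLM_apply] using this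
    apply ext_inner_right ℝ
    intro v
    rw [hess_symm 𝓗 hc𝓗 z (Jmap (A z + b)) v, J_adj]
    have h1 : ⟪A z + b, Jmap (hess 𝓗 z v)⟫ = -⟪A v, Jmap (gradient 𝓗 z)⟫ := by
      have := hDv v; linarith
    rw [h1, neg_neg, hA, real_inner_comm]
  -- differentiated key identity
  have hkey' : ∀ z v : Phase (n+1),
      fderiv ℝ (fun y => hess 𝓗 y) z v (Jmap (A z + b)) + hess 𝓗 z (Jmap (A v))
        = A (Jmap (hess 𝓗 z v)) := by
    intro z v
    have hΦd : HasFDerivAt (fun y => hess 𝓗 y) (fderiv ℝ (fun y => hess 𝓗 y) z) z :=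
      ((hΦc.differentiable one_ne_zero) z).hasFDerivAt
    have hAd : HasFDerivAt (fun y : Phase (n+1) => A y + b)
        (A : Phase (n+1) →L[ℝ] Phase (n+1)) z := by
      simpa using (A.hasFDerivAt (x := z)).add_const b
    have hmd : HasFDerivAt (fun y : Phase (n+1) => Jmap (A y + b)) (Jmap.comp A) z :=
      Jmap.hasFDerivAt.comp z hAd
    have hlhs : HasFDerivAt (fun y => hess 𝓗 y (Jmap (A y + b)))
        ((hess 𝓗 z).comp (Jmap.comp A)
          + (fderiv ℝ (fun y => hess 𝓗 y) z).flip (Jmap (A z + b))) z :=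
      hΦd.clm_apply hmd
    have hrhs : HasFDerivAt (fun y => A (Jmap (gradient 𝓗 y)))
        ((A.comp Jmap).comp (hess 𝓗 z)) z :=
      (A.comp Jmap).hasFDerivAt.comp z ((hFc.differentiable two_ne_zero z).hasFDerivAt)
    have heq : (fun y => hess 𝓗 y (Jmap (A y + b)))
        = (fun y => A (Jmap (gradient 𝓗 y))) := funext (fun y => hkey y)
    have hD : ((hess 𝓗 z).comp (Jmap.comp A)
          + (fderiv ℝ (fun y => hess 𝓗 y) z).flip (Jmap (A z + b)))
        = (A.comp Jmap).comp (hess 𝓗 z) := (heq ▸ hlhs).unique hrhs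
    have h1 : hess 𝓗 z (Jmap (A v))
          + fderiv ℝ (fun y => hess 𝓗 y) z v (Jmap (A z + b))
        = A (Jmap (hess 𝓗 z v)) := ContinuousLinearMap.ext_iff.mp hD v
    rw [← h1]
    exact add_comm _ _
  -- the derivative of psi along the Hamiltonian field of L vanishes
  have hψ : ∀ z : Phase (n+1), fderiv ℝ (psi 𝓗) z (Jmap (A z + b)) = 0 := by
    intro z
    have hXd : HasFDerivAt (fun y => Jmap (gradient 𝓗 y)) (Jmap.comp (hess 𝓗 z)) z :=
      Jmap.hasFDerivAt.comp z ((hFc.differentiable two_ne_zero z).hasFDerivAt)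
    have hΦd : HasFDerivAt (fun y => hess 𝓗 y) (fderiv ℝ (fun y => hess 𝓗 y) z) z :=
      ((hΦc.differentiable one_ne_zero) z).hasFDerivAt
    have hT : HasFDerivAt (fun y => hess 𝓗 y (Jmap (gradient 𝓗 y)))
        ((hess 𝓗 z).comp (Jmap.comp (hess 𝓗 z))
          + (fderiv ℝ (fun y => hess 𝓗 y) z).flip (Jmap (gradient 𝓗 z))) z :=
      hΦd.clm_apply hXd
    have hψd : HasFDerivAt (psi 𝓗)
        ((fderivInnerCLM ℝ (Jmap (gradient 𝓗 z), hess 𝓗 z (Jmap (gradient 𝓗 z)))).comp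
          ((Jmap.comp (hess 𝓗 z)).prod
            ((hess 𝓗 z).comp (Jmap.comp (hess 𝓗 z))
              + (fderiv ℝ (fun y => hess 𝓗 y) z).flip (Jmap (gradient 𝓗 z))))) z :=
      hXd.inner ℝ hT
    set X := Jmap (gradient 𝓗 z) with hX
    set u := Jmap (A z + b) with hu
    have hval : fderiv ℝ (psi 𝓗) z u
        = ⟪X, hess 𝓗 z (Jmap (hess 𝓗 z u)) + fderiv ℝ (fun y => hess 𝓗 y) z u X⟫
          + ⟪Jmap (hess 𝓗 z u), hess 𝓗 z X⟫ := by
      rw [hψd.fderiv]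
      show (fderivInnerCLM ℝ (X, hess 𝓗 z X))
          (Jmap (hess 𝓗 z u), hess 𝓗 z (Jmap (hess 𝓗 z u))
            + fderiv ℝ (fun y => hess 𝓗 y) z u X) = _
      rw [fderivInnerCLM_apply]
    rw [hval]
    have hkz : hess 𝓗 z u = A X := hkey z
    rw [hkz]
    have h3 : fderiv ℝ (fun y => hess 𝓗 y) z u X
        = fderiv ℝ (fun y => hess 𝓗 y) z X u := hess3_symm 𝓗 hc𝓗 z u X
    rw [h3]
    have h4 : fderiv ℝ (fun y => hess 𝓗 y) z X u
        = A (Jmap (hess 𝓗 z X)) - hess 𝓗 z (Jmap (A X)) := by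
      have h := hkey' z X
      rw [← hu] at h
      exact eq_sub_of_add_eq h
    rw [h4]
    have h5 : ⟪X, A (Jmap (hess 𝓗 z X))⟫ = ⟪A X, Jmap (hess 𝓗 z X)⟫ :=
      (hA X (Jmap (hess 𝓗 z X))).symm
    have h6 : ⟪Jmap (A X), hess 𝓗 z X⟫ = -⟪A X, Jmap (hess 𝓗 z X)⟫ :=
      J_adj (A X) (hess 𝓗 z X)
    simp only [inner_add_right, inner_sub_right]
    linarith [h5, h6]
  -- final assembly
  have hLz1z0 : L z₁ - L z₀ = ⟪A zbar + b, z₁ - z₀⟫ := by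
    rw [hzbar, hL z₁, hL z₀]
    have h01 : ⟪z₀, A z₁⟫ = ⟪z₁, A z₀⟫ := by
      rw [← hA z₀ z₁, real_inner_comm]
    simp only [inner_add_left, inner_sub_right, map_smul, map_add, inner_smul_left,
      conj_trivial, inner_add_right]
    linarith [h01, hA z₀ z₁, hA z₁ z₀, real_inner_comm (A z₁) z₁, real_inner_comm (A z₀) z₀,
      real_inner_comm z₁ (A z₁), real_inner_comm z₀ (A z₀)]
  have hb1 : ⟪A zbar + b, Jmap (gradient 𝓗 zbar)⟫ = 0 := by
    rw [← hgradL zbar]; exact hbracket zbar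
  have hb2 : ⟪A zbar + b, Jmap (gradient (psi 𝓗) zbar)⟫ = 0 := by
    have h7 : ⟪A zbar + b, Jmap (gradient (psi 𝓗) zbar)⟫
        = -⟪Jmap (A zbar + b), gradient (psi 𝓗) zbar⟫ := by
      rw [J_adj]; ring
    rw [h7, real_inner_comm, grad_inner, hψ zbar]
    ring
  have : L z₁ - L z₀ = 0 := by
    rw [hLz1z0, hstep, inner_add_right, real_inner_smul_right, real_inner_smul_right,
      hb1, hb2]
    ring
  linarith [this]
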